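/- Let V : (0,1] → [0,∞) be nondecreasing and a : (0,1] → [0,∞) with V(t) = ∫_0^t a(ρ) dρ, and suppose V(r)^{(n-s)/n} ≤ C ∫_0^r a(ρ)(r-ρ)^{-s} dρ for all r ∈ (0,1]. Then there exists c > 0 depending only on n, s, C such that if V(1) ≤ c then V(1/2) = 0. -/

import Mathlib

open MeasureTheory Set

lemma lint_kernel (s : ℝ) (hs : s ∈ Set.Ioo (0:ℝ) 1) (ρ t : ℝ) (hρt : ρ < t) :
    ∫⁻ r in Set.Ioc ρ t, ENNReal.ofReal ((r - ρ) ^ (-s)) =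
      ENNReal.ofReal ((t - ρ) ^ (1 - s) / (1 - s)) := by
  have hexp : (-1:ℝ) < -s := by linarith [hs.2]
  have hii : IntervalIntegrable (fun x : ℝ => (x - ρ) ^ (-s)) volume ρ t := by
    have := (intervalIntegral.intervalIntegrable_rpow' (a := 0) (b := t - ρ) hexp).comp_sub_right ρ
    simpa using this
  have hint : IntegrableOn (fun r : ℝ => (r - ρ) ^ (-s)) (Set.Ioc ρ t) :=
    (intervalIntegrable_iff_integrableOn_Ioc_of_le hρt.le).mp hii
  have hnn : 0 ≤ᵐ[volume.restrict (Set.Ioc ρ t)] fun r : ℝ => (r - ρ) ^ (-s) := by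
    filter_upwards [ae_restrict_mem measurableSet_Ioc] with r hr
    exact Real.rpow_nonneg (by linarith [hr.1]) _
  rw [← ofReal_integral_eq_lintegral_ofReal hint hnn]
  congr 1
  have h1 : ∫ r in Set.Ioc ρ t, (r - ρ) ^ (-s) = ∫ r in ρ..t, (r - ρ) ^ (-s) :=
    (intervalIntegral.integral_of_le hρt.le).symm
  rw [h1, intervalIntegral.integral_comp_sub_right (fun x => x ^ (-s)) ρ]
  rw [integral_rpow (Or.inl hexp)]
  rw [sub_self, Real.zero_rpow (by linarith : -s + 1 ≠ 0)]
  ring_nf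

lemma key_ineq (s C : ℝ) (hs : s ∈ Set.Ioo (0:ℝ) 1) (hC : 0 < C) (θ : ℝ) (hθ : 0 < θ)
    (V a : ℝ → ℝ)
    (hV0 : ∀ t ∈ Set.Ioc (0:ℝ) 1, 0 ≤ V t)
    (hmono : MonotoneOn V (Set.Ioc (0:ℝ) 1))
    (ha0 : ∀ ρ, 0 ≤ a ρ)
    (haint : IntegrableOn a (Set.Ioc (0:ℝ) 1))
    (hVint : ∀ t ∈ Set.Ioc (0:ℝ) 1, V t = ∫ ρ in Set.Ioo (0:ℝ) t, a ρ)
    (hineq : ∀ r ∈ Set.Ioc (0:ℝ) 1,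
      V r ^ θ ≤ C * ∫ ρ in Set.Ioo (0:ℝ) r, a ρ * (r - ρ) ^ (-s))
    (t' t : ℝ) (h1 : 0 < t') (h2 : t' < t) (h3 : t ≤ 1) :
    (t - t') * V t' ^ θ ≤ (C / (1 - s)) * V t := by
  obtain ⟨hs0, hs1⟩ := hs
  have hF : ∀ r ρ : ℝ, True := fun _ _ => trivial
  set F : ℝ → ℝ → ENNReal := fun r ρ =>
    (Set.Ioo (0:ℝ) r).indicator
      (fun ρ' => ENNReal.ofReal (a ρ') * ENNReal.ofReal ((r - ρ') ^ (-s))) ρ with hFdef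
  set μ1 := volume.restrict (Set.Ioc t' t) with hμ1
  set μ2 := volume.restrict (Set.Ioc (0:ℝ) 1) with hμ2
  -- measurability of uncurry F
  have hA : AEMeasurable (fun ρ => ENNReal.ofReal (a ρ)) μ2 :=
    ENNReal.measurable_ofReal.comp_aemeasurable haint.1.aemeasurable
  have hFmeas : AEMeasurable (Function.uncurry F) (μ1.prod μ2) := by
    have h1m : AEMeasurable (fun p : ℝ × ℝ => ENNReal.ofReal (a p.2)) (μ1.prod μ2) := hA.comp_snd
    have h2m : Measurable (fun p : ℝ × ℝ => ENNReal.ofReal ((p.1 - p.2) ^ (-s))) :=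
      ((measurable_fst.sub measurable_snd).pow_const (-s)).ennreal_ofReal
    have hset : MeasurableSet {p : ℝ × ℝ | 0 < p.2 ∧ p.2 < p.1} := by
      apply MeasurableSet.inter
      · exact measurableSet_lt measurable_const measurable_snd
      · exact measurableSet_lt measurable_snd measurable_fst
    have : Function.uncurry F = Set.indicator {p : ℝ × ℝ | 0 < p.2 ∧ p.2 < p.1}
        (fun p => ENNReal.ofReal (a p.2) * ENNReal.ofReal ((p.1 - p.2) ^ (-s))) := by
      funext p
      simp only [Function.uncurry, hFdef, Set.indicator_apply, Set.mem_Ioo, Set.mem_setOf_eq]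
    rw [this]
    exact (h1m.mul h2m.aemeasurable).indicator hset
  -- lower bound on inner integral
  have hlow : ∀ r ∈ Set.Ioc t' t,
      ENNReal.ofReal (V t' ^ θ / C) ≤ ∫⁻ ρ, F r ρ ∂μ2 := by
    intro r hr
    have hr01 : r ∈ Set.Ioc (0:ℝ) 1 := ⟨lt_trans h1 hr.1, le_trans hr.2 h3⟩
    have hinner : ∫⁻ ρ, F r ρ ∂μ2
        = ∫⁻ ρ in Set.Ioo (0:ℝ) r,
            ENNReal.ofReal (a ρ) * ENNReal.ofReal ((r - ρ) ^ (-s)) := by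
      have hsub' : Set.Ioo (0:ℝ) r ⊆ Set.Ioc (0:ℝ) 1 :=
        fun x hx => ⟨hx.1, le_trans hx.2.le hr01.2⟩
      rw [hμ2, lintegral_indicator measurableSet_Ioo,
        Measure.restrict_restrict measurableSet_Ioo, Set.inter_eq_left.mpr hsub']
    rw [hinner]
    have hVr : V t' ^ θ ≤ V r ^ θ :=
      Real.rpow_le_rpow (hV0 t' ⟨h1, by linarith⟩)
        (hmono ⟨h1, by linarith⟩ hr01 hr.1.le) hθ.le
    have hIr : V t' ^ θ / C ≤ ∫ ρ in Set.Ioo (0:ℝ) r, a ρ * (r - ρ) ^ (-s) := by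
      rw [div_le_iff₀' hC]
      exact le_trans hVr (hineq r hr01)
    refine le_trans (ENNReal.ofReal_le_ofReal hIr) ?_
    by_cases hint : IntegrableOn (fun ρ => a ρ * (r - ρ) ^ (-s)) (Set.Ioo (0:ℝ) r)
    · have hnn : 0 ≤ᵐ[volume.restrict (Set.Ioo (0:ℝ) r)] fun ρ => a ρ * (r - ρ) ^ (-s) := by
        filter_upwards [ae_restrict_mem measurableSet_Ioo] with ρ hρ
        exact mul_nonneg (ha0 ρ) (Real.rpow_nonneg (by linarith [hρ.2]) _)
      refine le_trans (le_of_eq (ofReal_integral_eq_lintegral_ofReal hint hnn)) (le_of_eq ?_)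
      apply lintegral_congr_ae
      filter_upwards [ae_restrict_mem measurableSet_Ioo] with ρ hρ
      rw [ENNReal.ofReal_mul (ha0 ρ)]
    · rw [integral_undef hint]
      simp
  -- upper bound on swapped inner integral
  have hup : ∀ ρ : ℝ, (∫⁻ r, F r ρ ∂μ1)
      ≤ (Set.Ioo (0:ℝ) t).indicator
          (fun ρ' => ENNReal.ofReal (a ρ') * ENNReal.ofReal (1 / (1 - s))) ρ := by
    intro ρ
    by_cases hρ : ρ ∈ Set.Ioo (0:ℝ) t
    · rw [Set.indicator_of_mem hρ]
      have heq : ∀ r : ℝ, F r ρ = (Set.Ioi ρ).indicator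
          (fun r' => ENNReal.ofReal (a ρ) * ENNReal.ofReal ((r' - ρ) ^ (-s))) r := by
        intro r
        simp only [hFdef, Set.indicator_apply, Set.mem_Ioo, Set.mem_Ioi]
        by_cases h : ρ < r
        · simp [h, hρ.1]
        · simp [h, fun h' : 0 < ρ ∧ ρ < r => h h'.2]
      simp_rw [heq]
      rw [hμ1, lintegral_indicator measurableSet_Ioi,
        Measure.restrict_restrict measurableSet_Ioi]
      calc ∫⁻ r in Set.Ioi ρ ∩ Set.Ioc t' t,
            ENNReal.ofReal (a ρ) * ENNReal.ofReal ((r - ρ) ^ (-s))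
          ≤ ∫⁻ r in Set.Ioc ρ t,
            ENNReal.ofReal (a ρ) * ENNReal.ofReal ((r - ρ) ^ (-s)) := by
            apply lintegral_mono_set
            rintro x ⟨hx1, hx2⟩
            exact ⟨hx1, hx2.2⟩
        _ = ENNReal.ofReal (a ρ) * ∫⁻ r in Set.Ioc ρ t, ENNReal.ofReal ((r - ρ) ^ (-s)) :=
            lintegral_const_mul' _ _ ENNReal.ofReal_ne_top
        _ = ENNReal.ofReal (a ρ) * ENNReal.ofReal ((t - ρ) ^ (1 - s) / (1 - s)) := by
            rw [lint_kernel s ⟨hs0, hs1⟩ ρ t hρ.2]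
        _ ≤ ENNReal.ofReal (a ρ) * ENNReal.ofReal (1 / (1 - s)) := by
            apply mul_le_mul_right
            apply ENNReal.ofReal_le_ofReal
            gcongr
            · exact Real.rpow_le_one (by linarith [hρ.1, hρ.2]) (by linarith [hρ.1]) (by linarith)
    · rw [Set.indicator_of_notMem hρ]
      refine le_trans (le_of_eq ?_) le_rfl
      rw [hμ1]
      have : ∀ r ∈ Set.Ioc t' t, F r ρ = 0 := by
        intro r hrr
        have : ρ ∉ Set.Ioo (0:ℝ) r := by
          intro hmem
          exact hρ ⟨hmem.1, lt_of_lt_of_le hmem.2 hrr.2⟩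
        simp [hFdef, Set.indicator_of_notMem this]
      rw [setLIntegral_congr_fun measurableSet_Ioc this]
      simp
  -- main chain
  have main : ENNReal.ofReal (V t' ^ θ / C) * ENNReal.ofReal (t - t')
      ≤ ENNReal.ofReal (V t * (1 / (1 - s))) := by
    calc ENNReal.ofReal (V t' ^ θ / C) * ENNReal.ofReal (t - t')
        = ∫⁻ _ in Set.Ioc t' t, ENNReal.ofReal (V t' ^ θ / C) := by
          rw [setLIntegral_const, Real.volume_Ioc]
      _ ≤ ∫⁻ r, (∫⁻ ρ, F r ρ ∂μ2) ∂μ1 := by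
          rw [hμ1]
          exact setLIntegral_mono' measurableSet_Ioc hlow
      _ = ∫⁻ ρ, (∫⁻ r, F r ρ ∂μ1) ∂μ2 := lintegral_lintegral_swap hFmeas
      _ ≤ ∫⁻ ρ, (Set.Ioo (0:ℝ) t).indicator
            (fun ρ' => ENNReal.ofReal (a ρ') * ENNReal.ofReal (1 / (1 - s))) ρ ∂μ2 :=
          lintegral_mono hup
      _ = ∫⁻ ρ in Set.Ioo (0:ℝ) t, ENNReal.ofReal (a ρ) * ENNReal.ofReal (1 / (1 - s)) := by
          rw [hμ2, lintegral_indicator measurableSet_Ioo,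
            Measure.restrict_restrict measurableSet_Ioo,
            Set.inter_eq_left.mpr (show Set.Ioo (0:ℝ) t ⊆ Set.Ioc (0:ℝ) 1 from
              fun x hx => ⟨hx.1, le_trans hx.2.le h3⟩)]
      _ = (∫⁻ ρ in Set.Ioo (0:ℝ) t, ENNReal.ofReal (a ρ)) * ENNReal.ofReal (1 / (1 - s)) :=
          lintegral_mul_const' _ _ ENNReal.ofReal_ne_top
      _ = ENNReal.ofReal (V t) * ENNReal.ofReal (1 / (1 - s)) := by
          have hsub : Set.Ioo (0:ℝ) t ⊆ Set.Ioc (0:ℝ) 1 :=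
            fun x hx => ⟨hx.1, le_trans hx.2.le h3⟩
          have hint : IntegrableOn a (Set.Ioo (0:ℝ) t) := haint.mono_set hsub
          rw [← ofReal_integral_eq_lintegral_ofReal hint (ae_of_all _ ha0),
            ← hVint t ⟨lt_trans h1 h2, h3⟩]
      _ = ENNReal.ofReal (V t * (1 / (1 - s))) := by
          rw [ENNReal.ofReal_mul (hV0 t ⟨lt_trans h1 h2, h3⟩)]
  have hnn1 : (0:ℝ) ≤ V t' ^ θ / C :=
    div_nonneg (Real.rpow_nonneg (hV0 t' ⟨h1, by linarith⟩) θ) hC.le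
  rw [← ENNReal.ofReal_mul hnn1] at main
  have hreal : V t' ^ θ / C * (t - t') ≤ V t * (1 / (1 - s)) := by
    have hrhs : 0 ≤ V t * (1 / (1 - s)) :=
      mul_nonneg (hV0 t ⟨lt_trans h1 h2, h3⟩) (one_div_nonneg.mpr (by linarith))
    exact (ENNReal.ofReal_le_ofReal_iff hrhs).mp main
  have hkey : (t - t') * V t' ^ θ = C * (V t' ^ θ / C * (t - t')) := by
    field_simp
  rw [hkey]
  calc C * (V t' ^ θ / C * (t - t')) ≤ C * (V t * (1 / (1 - s))) :=
        mul_le_mul_of_nonneg_left hreal hC.le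
    _ = C / (1 - s) * V t := by ring


/-- De Giorgi iteration lemma: if `V(t) = ∫_0^t a` is nondecreasing on `(0,1]` and satisfies
`V(r)^{(n-s)/n} ≤ C ∫_0^r a(ρ)(r-ρ)^{-s} dρ`, then there is `c > 0` (depending only on
`n`, `s`, `C`) such that `V(1) ≤ c` implies `V(1/2) = 0`. -/
theorem deGiorgi_iteration (n : ℕ) (hn : 1 ≤ n) (s C : ℝ)
    (hs : s ∈ Set.Ioo (0:ℝ) 1) (hC : 0 < C) :
    ∃ c : ℝ, 0 < c ∧ ∀ V a : ℝ → ℝ,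
      (∀ t ∈ Set.Ioc (0:ℝ) 1, 0 ≤ V t) →
      MonotoneOn V (Set.Ioc (0:ℝ) 1) →
      (∀ ρ, 0 ≤ a ρ) →
      IntegrableOn a (Set.Ioc (0:ℝ) 1) →
      (∀ t ∈ Set.Ioc (0:ℝ) 1, V t = ∫ ρ in Set.Ioo (0:ℝ) t, a ρ) →
      (∀ r ∈ Set.Ioc (0:ℝ) 1,
        V r ^ (((n : ℝ) - s) / (n : ℝ)) ≤ C * ∫ ρ in Set.Ioo (0:ℝ) r, a ρ * (r - ρ) ^ (-s)) →
      V 1 ≤ c → V (1/2) = 0 := by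
  obtain ⟨hs0, hs1⟩ := hs
  have hn1 : (1:ℝ) ≤ (n:ℝ) := by exact_mod_cast hn
  set θ : ℝ := ((n:ℝ) - s) / (n:ℝ) with hθdef
  have hnpos : (0:ℝ) < n := by linarith
  have hθ0 : 0 < θ := div_pos (by linarith) hnpos
  have hθ1 : θ < 1 := by
    rw [hθdef, div_lt_one hnpos]; linarith
  set K : ℝ := C / (1 - s) with hKdef
  have hK : 0 < K := div_pos hC (by linarith)
  set m : ℝ := 2 / (1 - θ) with hmdef
  have hm0 : 0 < m := div_pos (by norm_num) (by linarith)
  have hmθ : m * (1 - θ) = 2 := by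
    rw [hmdef]; exact div_mul_cancel₀ 2 (by linarith)
  set δ : ℝ := (2:ℝ) ^ (-(2 + m * θ)) / K with hδdef
  have hδ : 0 < δ := div_pos (Real.rpow_pos_of_pos (by norm_num) _) hK
  set ε : ℝ := min 1 (δ ^ (1 / (1 - θ))) with hεdef
  have hε : 0 < ε := lt_min one_pos (Real.rpow_pos_of_pos hδ _)
  have hεδ : ε ^ (1 - θ) ≤ δ := by
    calc ε ^ (1 - θ) ≤ (δ ^ (1 / (1 - θ))) ^ (1 - θ) :=
          Real.rpow_le_rpow hε.le (min_le_right _ _) (by linarith)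
      _ = δ := by
          rw [← Real.rpow_mul hδ.le, one_div,
            inv_mul_cancel₀ (by linarith : (1:ℝ) - θ ≠ 0), Real.rpow_one]
  refine ⟨ε, hε, ?_⟩
  intro V a hV0 hmono ha0 haint hVint hineq hV1
  set t : ℕ → ℝ := fun k => 1/2 + (1/2:ℝ) ^ (k + 1) with htdef
  have ht_half : ∀ k, 1/2 < t k := by
    intro k
    have : (0:ℝ) < (1/2:ℝ) ^ (k+1) := by positivity
    simp only [htdef]; linarith
  have ht_mem : ∀ k, t k ∈ Set.Ioc (0:ℝ) 1 := by
    intro k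
    refine ⟨lt_trans (by norm_num) (ht_half k), ?_⟩
    have h12 : (1/2:ℝ) ^ (k+1) ≤ (1/2:ℝ) ^ 1 :=
      pow_le_pow_of_le_one (by norm_num) (by norm_num) (Nat.succ_le_succ (Nat.zero_le k))
    simp only [htdef]; simp at h12 ⊢; linarith
  have ht_diff : ∀ k, t k - t (k+1) = (1/2:ℝ) ^ (k+2) := by
    intro k; simp only [htdef]; ring
  have ht_lt : ∀ k, t (k+1) < t k := by
    intro k
    have h : (0:ℝ) < t k - t (k+1) := by
      rw [ht_diff k]; positivity
    exact sub_pos.mp h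
  -- the key recursive inequality
  have hrec : ∀ k : ℕ, V (t (k+1)) ^ θ ≤ (2:ℝ) ^ (k+2) * (K * V (t k)) := by
    intro k
    have hkey := key_ineq s C ⟨hs0, hs1⟩ hC θ hθ0 V a hV0 hmono ha0 haint hVint hineq
      (t (k+1)) (t k) (ht_mem (k+1)).1 (ht_lt k) (ht_mem k).2
    rw [ht_diff k] at hkey
    have h12 : (2:ℝ) ^ (k+2) * (1/2:ℝ) ^ (k+2) = 1 := by
      rw [← mul_pow]; norm_num
    calc V (t (k+1)) ^ θ = ((2:ℝ) ^ (k+2) * (1/2:ℝ) ^ (k+2)) * V (t (k+1)) ^ θ := by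
          rw [h12, one_mul]
      _ = (2:ℝ) ^ (k+2) * ((1/2:ℝ) ^ (k+2) * V (t (k+1)) ^ θ) := by ring
      _ ≤ (2:ℝ) ^ (k+2) * (K * V (t k)) :=
          mul_le_mul_of_nonneg_left hkey (by positivity)
  -- induction: V (t k) ≤ ε * 2 ^ (-(m k))
  have hind : ∀ k : ℕ, V (t k) ≤ ε * (2:ℝ) ^ (-(m * (k:ℝ))) := by
    intro k
    induction k with
    | zero =>
        have ht0 : t 0 = 1 := by simp [htdef]; norm_num
        simp only [Nat.cast_zero, mul_zero, neg_zero, Real.rpow_zero, mul_one, ht0]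
        exact hV1
    | succ k ih =>
        have hε_split : ε ^ θ * ε ^ (1 - θ) = ε := by
          rw [← Real.rpow_add hε]; norm_num
        have hnp : ((2:ℝ) ^ (k+2) : ℝ) = (2:ℝ) ^ ((k:ℝ) + 2) := by
          rw [← Real.rpow_natCast (2:ℝ) (k+2)]; push_cast; ring_nf
        have H1 : V (t (k+1)) ^ θ ≤ (2:ℝ) ^ ((k:ℝ)+2) * (K * (ε * (2:ℝ)^(-(m*(k:ℝ))))) := by
          refine le_trans (hrec k) ?_
          rw [← hnp]
          exact mul_le_mul_of_nonneg_left
            (mul_le_mul_of_nonneg_left ih hK.le) (by positivity)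
        have H2 : (2:ℝ) ^ ((k:ℝ)+2) * (K * (ε * (2:ℝ)^(-(m*(k:ℝ)))))
            = ε ^ θ * (K * ε ^ (1-θ) * (2:ℝ) ^ (((k:ℝ)+2) + -(m*(k:ℝ)))) := by
          have h2a : (2:ℝ)^(((k:ℝ)+2) + -(m*(k:ℝ)))
              = (2:ℝ)^((k:ℝ)+2) * (2:ℝ)^(-(m*(k:ℝ))) :=
            Real.rpow_add (by norm_num) _ _
          calc (2:ℝ)^((k:ℝ)+2) * (K * (ε * (2:ℝ)^(-(m*(k:ℝ)))))
              = (2:ℝ)^((k:ℝ)+2) * (K * ((ε^θ * ε^(1-θ)) * (2:ℝ)^(-(m*(k:ℝ))))) := by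
                rw [hε_split]
            _ = ε^θ * (K * ε^(1-θ) * ((2:ℝ)^((k:ℝ)+2) * (2:ℝ)^(-(m*(k:ℝ))))) := by ring
            _ = ε^θ * (K * ε^(1-θ) * (2:ℝ)^(((k:ℝ)+2) + -(m*(k:ℝ)))) := by rw [h2a]
        have H3 : K * ε ^ (1-θ) * (2:ℝ) ^ (((k:ℝ)+2) + -(m*(k:ℝ)))
            ≤ (2:ℝ) ^ (-(m*((k:ℝ)+1))*θ) := by
          have hKe : K * ε ^ (1-θ) ≤ (2:ℝ) ^ (-(2 + m*θ)) := by
            calc K * ε ^ (1-θ) ≤ K * δ := mul_le_mul_of_nonneg_left hεδ hK.le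
              _ = (2:ℝ) ^ (-(2 + m*θ)) := by
                  rw [hδdef]; field_simp
          have h2mono : (2:ℝ) ^ (-(2 + m*θ)) ≤ (2:ℝ) ^ ((k:ℝ) - (2 + m*θ)) :=
            Real.rpow_le_rpow_of_exponent_le one_le_two
              (by linarith [Nat.cast_nonneg (α := ℝ) k])
          calc K * ε ^ (1-θ) * (2:ℝ) ^ (((k:ℝ)+2) + -(m*(k:ℝ)))
              ≤ (2:ℝ) ^ ((k:ℝ) - (2 + m*θ)) * (2:ℝ) ^ (((k:ℝ)+2) + -(m*(k:ℝ))) :=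
                mul_le_mul_of_nonneg_right (hKe.trans h2mono)
                  (Real.rpow_nonneg (by norm_num) _)
            _ = (2:ℝ) ^ (((k:ℝ) - (2 + m*θ)) + (((k:ℝ)+2) + -(m*(k:ℝ)))) :=
                (Real.rpow_add (by norm_num) _ _).symm
            _ = (2:ℝ) ^ (-(m*((k:ℝ)+1))*θ) := by
                congr 1
                linear_combination (-(k:ℝ)) * hmθ
        have hRHS : (ε * (2:ℝ)^(-(m*((k:ℝ)+1)))) ^ θ
            = ε ^ θ * (2:ℝ) ^ (-(m*((k:ℝ)+1))*θ) := by
          rw [Real.mul_rpow hε.le (Real.rpow_nonneg (by norm_num) _),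
            ← Real.rpow_mul (by norm_num : (0:ℝ) ≤ 2)]
        have Hfin : V (t (k+1)) ^ θ ≤ (ε * (2:ℝ)^(-(m*((k:ℝ)+1)))) ^ θ := by
          rw [hRHS]
          refine le_trans H1 (le_trans (le_of_eq H2) ?_)
          exact mul_le_mul_of_nonneg_left H3 (Real.rpow_nonneg hε.le θ)
        have hgoal : V (t (k+1)) ≤ ε * (2:ℝ)^(-(m*((k:ℝ)+1))) := by
          by_contra hcon
          push_neg at hcon
          have := Real.rpow_lt_rpow (by positivity) hcon hθ0
          linarith
        have hcast : ((k+1:ℕ):ℝ) = (k:ℝ) + 1 := by push_cast; ring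
        rw [hcast]
        exact hgoal
  -- conclude
  have hVhalf : ∀ k : ℕ, V (1/2) ≤ ε * ((2:ℝ) ^ (-m)) ^ k := by
    intro k
    have h1 : V (1/2) ≤ V (t k) :=
      hmono (by norm_num) (ht_mem k) (ht_half k).le
    have h2 : ((2:ℝ) ^ (-m)) ^ k = (2:ℝ) ^ (-(m * (k:ℝ))) := by
      rw [← Real.rpow_natCast ((2:ℝ) ^ (-m)) k, ← Real.rpow_mul (by norm_num : (0:ℝ) ≤ 2)]
      ring_nf
    rw [h2]
    exact le_trans h1 (hind k)
  have hq0 : (0:ℝ) ≤ (2:ℝ) ^ (-m) := Real.rpow_nonneg (by norm_num) _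
  have hq1 : (2:ℝ) ^ (-m) < 1 :=
    Real.rpow_lt_one_of_one_lt_of_neg one_lt_two (by linarith)
  have htend : Filter.Tendsto (fun k : ℕ => ε * ((2:ℝ) ^ (-m)) ^ k) Filter.atTop (nhds 0) := by
    have := (tendsto_pow_atTop_nhds_zero_of_lt_one hq0 hq1).const_mul ε
    simpa using this
  have hle0 : V (1/2) ≤ 0 := ge_of_tendsto' htend hVhalf
  have hge0 : 0 ≤ V (1/2) := hV0 (1/2) (by norm_num)
  linarith
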